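/- Let k ≥ 1, and let g ∈ ℝ⟦X⟧ be a formal power series with constant coefficient 0 that is k-samo (all coefficients nonnegative, and the i-th coefficient strictly positive for every i ≥ k). Let f ∈ ℝ⟦X⟧ satisfy the differential equation f′ = g′ · f (formal derivatives) together with constant coefficient f(0) = 1, so that f = exp(g). Then f is k-samo: every coefficient of f is nonnegative, and the i-th coefficient of f is strictly positive for all i ≥ k. (If log f is k-samo, then so is f.) -/

import Mathlib

open PowerSeries

/-- If `log f` is `k`-samo then so is `f`: if `g` has zero constant term, all
    coefficients of `g` nonnegative and those of index `≥ k` positive (`k ≥ 1`),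
    and `f` satisfies `f' = g' f` with `f(0) = 1` (so that `f = exp g`), then all
    coefficients of `f` are nonnegative and those of index `≥ k` are positive. -/
theorem samo_exp (k : ℕ) (hk : 1 ≤ k) (g f : ℝ⟦X⟧)
    (hg0 : constantCoeff g = 0)
    (hgnn : ∀ i, 0 ≤ coeff i g) (hgpos : ∀ i, k ≤ i → 0 < coeff i g)
    (hderiv : PowerSeries.derivative ℝ f = PowerSeries.derivative ℝ g * f)
    (hf0 : constantCoeff f = 1) :
    (∀ i, 0 ≤ coeff i f) ∧ (∀ i, k ≤ i → 0 < coeff i f) := by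
  have key : ∀ n : ℕ, coeff (n + 1) f * (n + 1) =
      ∑ p ∈ Finset.HasAntidiagonal.antidiagonal n, coeff (p.1 + 1) g * (p.1 + 1) * coeff p.2 f := by
    intro n
    have := congrArg (coeff n) hderiv
    rw [coeff_derivative, coeff_mul] at this
    simpa [coeff_derivative] using this
  have hnn : ∀ n, 0 ≤ coeff n f := by
    intro n
    induction n using Nat.strong_induction_on with
    | _ n ih =>
      match n with
      | 0 => simp [hf0]
      | (m + 1) =>
        have h1 : (0:ℝ) < (m:ℝ) + 1 := by positivity
        have h2 : 0 ≤ coeff (m + 1) f * (m + 1) := by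
          rw [key m]
          apply Finset.sum_nonneg
          intro p hp
          have hp2 : p.2 < m + 1 := by
            have := Finset.HasAntidiagonal.antidiagonal.snd_le hp
            omega
          have := ih p.2 hp2
          have := hgnn (p.1 + 1)
          positivity
        nlinarith
  refine ⟨hnn, fun i hi => ?_⟩
  obtain ⟨m, rfl⟩ : ∃ m, i = m + 1 := ⟨i - 1, by omega⟩
  have h1 : (0:ℝ) < (m:ℝ) + 1 := by positivity
  have h2 : 0 < coeff (m + 1) f * (m + 1) := by
    rw [key m]
    have hmem : (m, 0) ∈ Finset.HasAntidiagonal.antidiagonal m := by simp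
    apply Finset.sum_pos' ?_ ⟨(m, 0), hmem, ?_⟩
    · intro p hp
      have := hnn p.2
      have := hgnn (p.1 + 1)
      positivity
    · have hg : 0 < coeff (m + 1) g := hgpos (m + 1) (by omega)
      have hf00 : coeff 0 f = 1 := by simpa using hf0
      simp only [hf00]
      positivity
  nlinarith
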